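/- arXiv:1211.6640 — 5 statements merged into one kernel-verified Lean document; each statement's English description precedes it below -/
import Mathlib

section
/- Let λ ∈ ℂ with λ ≠ 1, let n ∈ ℤ_{≥0}, and let p(x) be a complex polynomial of degree at most n written as p(x) = Σ_{k=0}^{n} b_k H_k(x|λ). Then for every 0 ≤ k ≤ n, b_k = (1/((1−λ)·k!))·(p^{(k)}(1) − λ·p^{(k)}(0)), where p^{(k)} denotes the k-th derivative of p. -/
open Polynomial PowerSeries Finset

theorem frobenius_euler_coefficients
    (lam : ℂ) (hlam : lam ≠ 1) (H : ℕ → Polynomial ℂ)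
    (hH : (PowerSeries.exp (Polynomial ℂ) - PowerSeries.C (Polynomial.C lam)) *
        PowerSeries.mk (fun n => Polynomial.C ((n.factorial : ℂ))⁻¹ * H n) =
      PowerSeries.C (Polynomial.C (1 - lam)) *
        PowerSeries.rescale Polynomial.X (PowerSeries.exp (Polynomial ℂ)))
    (n : ℕ) (p : Polynomial ℂ) (hp : p.degree ≤ n) (b : ℕ → ℂ)
    (hb : p = ∑ k ∈ Finset.range (n + 1), Polynomial.C (b k) * H k)
    (k : ℕ) (hk : k ≤ n) :
    b k = (1 / ((1 - lam) * (k.factorial : ℂ))) *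
      ((Polynomial.derivative^[k] p).eval 1 - lam * (Polynomial.derivative^[k] p).eval 0) := by
  have h1 : (1 : ℂ) - lam ≠ 0 := sub_ne_zero.mpr (Ne.symm hlam)
  let φ : (Polynomial ℂ) →+* (Polynomial ℂ) := (taylorAlgHom (1 : ℂ)).toRingHom
  have hφC : ∀ c : ℂ, φ (Polynomial.C c) = Polynomial.C c := fun c => taylor_C _ _
  have hφalg : ∀ q : ℚ, φ (algebraMap ℚ (Polynomial ℂ) q) = algebraMap ℚ (Polynomial ℂ) q := fun q => by
    have : (algebraMap ℚ (Polynomial ℂ) q) = Polynomial.C (algebraMap ℚ ℂ q) := rfl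
    rw [this, hφC]
  -- apply the ring hom coefficientwise to hH
  have hmap := congrArg (PowerSeries.map φ) hH
  rw [map_mul, map_sub, PowerSeries.map_C, PowerSeries.map_exp, hφC] at hmap
  have hmk : PowerSeries.map φ (PowerSeries.mk (fun n => Polynomial.C ((n.factorial : ℂ))⁻¹ * H n))
      = PowerSeries.mk (fun n => Polynomial.C ((n.factorial : ℂ))⁻¹ * taylor (1 : ℂ) (H n)) := by
    ext m
    simp only [PowerSeries.coeff_map, PowerSeries.coeff_mk, map_mul, hφC]
    rfl
  have hres : PowerSeries.map φ (PowerSeries.rescale Polynomial.X (PowerSeries.exp (Polynomial ℂ)))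
      = PowerSeries.exp (Polynomial ℂ) * PowerSeries.rescale Polynomial.X (PowerSeries.exp (Polynomial ℂ)) := by
    have h2 := PowerSeries.exp_mul_exp_eq_exp_add (1 : (Polynomial ℂ)) (Polynomial.X)
    rw [PowerSeries.rescale_one] at h2
    rw [RingHom.id_apply] at h2
    rw [h2]
    ext m
    simp only [PowerSeries.coeff_map, PowerSeries.coeff_rescale, PowerSeries.coeff_exp,
      map_mul, map_pow, hφalg]
    have hx : φ Polynomial.X = Polynomial.X + Polynomial.C 1 := taylor_X _
    rw [hx, Polynomial.C_1, add_comm Polynomial.X (1 : Polynomial ℂ)]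
  rw [hmk, map_mul, PowerSeries.map_C, hφC, hres] at hmap
  -- cancellation setup
  set E := PowerSeries.exp (Polynomial ℂ) with hE
  set D := E - PowerSeries.C (Polynomial.C lam) with hD
  have hDne : D ≠ 0 := by
    intro h
    have h2 := congrArg (PowerSeries.constantCoeff) h
    rw [hD, hE, map_sub, PowerSeries.constantCoeff_exp, PowerSeries.constantCoeff_C,
      map_zero, sub_eq_zero] at h2
    exact hlam (by simpa using (Polynomial.C_injective (by simpa using h2.symm) : lam = 1))
  set mkT := PowerSeries.mk (fun n => Polynomial.C ((n.factorial : ℂ))⁻¹ * taylor (1 : ℂ) (H n))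
    with hmkT
  set mkH := PowerSeries.mk (fun n => Polynomial.C ((n.factorial : ℂ))⁻¹ * H n) with hmkH
  set G := PowerSeries.rescale Polynomial.X E with hG
  have hkey : mkT - PowerSeries.C (Polynomial.C lam) * mkH
      = PowerSeries.C (Polynomial.C (1 - lam)) * G := by
    apply mul_left_cancel₀ hDne
    calc D * (mkT - PowerSeries.C (Polynomial.C lam) * mkH)
        = D * mkT - PowerSeries.C (Polynomial.C lam) * (D * mkH) := by ring
      _ = PowerSeries.C (Polynomial.C (1 - lam)) * (E * G)
          - PowerSeries.C (Polynomial.C lam) * (PowerSeries.C (Polynomial.C (1 - lam)) * G)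
            := by rw [hmap, hH]
      _ = D * (PowerSeries.C (Polynomial.C (1 - lam)) * G) := by rw [hD]; ring
  -- extract polynomial identity
  have hpoly : ∀ m : ℕ, taylor (1 : ℂ) (H m) - Polynomial.C lam * H m
      = Polynomial.C (1 - lam) * Polynomial.X ^ m := by
    intro m
    have h2 := congrArg (PowerSeries.coeff m) hkey
    rw [hmkT, hmkH, hG, hE] at h2
    rw [map_sub, PowerSeries.coeff_C_mul, PowerSeries.coeff_C_mul, PowerSeries.coeff_mk,
      PowerSeries.coeff_mk, PowerSeries.coeff_rescale, PowerSeries.coeff_exp] at h2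
    have halg : (algebraMap ℚ (Polynomial ℂ) (1 / (m.factorial : ℚ)))
        = Polynomial.C ((m.factorial : ℂ))⁻¹ := by
      have : (algebraMap ℚ (Polynomial ℂ) (1 / (m.factorial : ℚ)))
          = Polynomial.C (algebraMap ℚ ℂ (1 / (m.factorial : ℚ))) := rfl
      rw [this]
      congr 1
      push_cast
      simp
    rw [halg] at h2
    have hne : Polynomial.C ((m.factorial : ℂ))⁻¹ ≠ (0 : (Polynomial ℂ)) := by
      simp [Polynomial.C_eq_zero, Nat.factorial_ne_zero, Nat.cast_ne_zero]
    apply mul_left_cancel₀ hne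
    calc Polynomial.C ((m.factorial : ℂ))⁻¹ * (taylor (1 : ℂ) (H m) - Polynomial.C lam * H m)
        = Polynomial.C ((m.factorial : ℂ))⁻¹ * taylor (1 : ℂ) (H m)
          - Polynomial.C lam * (Polynomial.C ((m.factorial : ℂ))⁻¹ * H m) := by ring
      _ = Polynomial.C (1 - lam) * (Polynomial.X ^ m * Polynomial.C ((m.factorial : ℂ))⁻¹) := h2
      _ = Polynomial.C ((m.factorial : ℂ))⁻¹ * (Polynomial.C (1 - lam) * Polynomial.X ^ m) := by
            ring
  -- evaluation of iterated derivatives of H m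
  have hval : ∀ m : ℕ, (Polynomial.derivative^[k] (H m)).eval 1
      - lam * (Polynomial.derivative^[k] (H m)).eval 0
      = if k = m then (1 - lam) * (k.factorial : ℂ) else 0 := by
    intro m
    have hd : ∀ (q : (Polynomial ℂ)) (a : ℂ), (Polynomial.derivative^[k] q).eval a
        = (k.factorial : ℂ) * (Polynomial.hasseDeriv k q).eval a := by
      intro q a
      rw [← Polynomial.factorial_smul_hasseDeriv (R := ℂ) k]
      simp [Polynomial.eval_smul, nsmul_eq_mul]
    rw [hd, hd]
    have h1' : (Polynomial.hasseDeriv k (H m)).eval 1 = (taylor (1 : ℂ) (H m)).coeff k := by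
      rw [Polynomial.taylor_coeff]
    have h0' : (Polynomial.hasseDeriv k (H m)).eval 0 = (H m).coeff k := by
      rw [← Polynomial.taylor_coeff, Polynomial.taylor_zero]
    rw [h1', h0']
    have hcoeff := congrArg (fun q : (Polynomial ℂ) => q.coeff k) (hpoly m)
    simp only [Polynomial.coeff_sub, Polynomial.coeff_C_mul, Polynomial.coeff_X_pow] at hcoeff
    have hc : (taylor (1 : ℂ) (H m)).coeff k - lam * (H m).coeff k
        = (1 - lam) * (if k = m then 1 else 0) := hcoeff
    by_cases hkm : k = m
    · rw [if_pos hkm] at hc ⊢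
      linear_combination (k.factorial : ℂ) * hc
    · rw [if_neg hkm] at hc ⊢
      linear_combination (k.factorial : ℂ) * hc
  -- finish
  have hder : Polynomial.derivative^[k] p
      = ∑ m ∈ Finset.range (n + 1), Polynomial.C (b m) * Polynomial.derivative^[k] (H m) := by
    rw [hb, Polynomial.iterate_derivative_sum]
    exact Finset.sum_congr rfl fun m _ => Polynomial.iterate_derivative_C_mul _ _ _
  have hsum : (Polynomial.derivative^[k] p).eval 1 - lam * (Polynomial.derivative^[k] p).eval 0
      = (1 - lam) * (k.factorial : ℂ) * b k := by
    rw [hder]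
    simp only [Polynomial.eval_finset_sum, Polynomial.eval_mul, Polynomial.eval_C]
    rw [Finset.mul_sum, ← Finset.sum_sub_distrib]
    have : ∀ m ∈ Finset.range (n + 1),
        b m * (Polynomial.derivative^[k] (H m)).eval 1
          - lam * (b m * (Polynomial.derivative^[k] (H m)).eval 0)
        = if k = m then (1 - lam) * (k.factorial : ℂ) * b k else 0 := by
      intro m _
      have hv := hval m
      by_cases hkm : k = m
      · rw [if_pos hkm] at hv ⊢
        subst hkm
        linear_combination b k * hv
      · rw [if_neg hkm] at hv ⊢
        linear_combination b m * hv
    rw [Finset.sum_congr rfl this, Finset.sum_ite_eq (Finset.range (n + 1)) k]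
    rw [if_pos (Finset.mem_range.mpr (Nat.lt_succ_of_le hk))]
  rw [hsum]
  have hfac : ((k.factorial : ℂ)) ≠ 0 := Nat.cast_ne_zero.mpr (Nat.factorial_ne_zero k)
  field_simp
end

section
/- For every λ ∈ ℂ with λ ≠ 0 and λ ≠ 1, and every n ∈ ℤ_{≥0}, the identity λ·H_n(x|λ^{−1}) + H_n(x|λ) = (1+λ)·Σ_{k=0}^{n} binom(n,k)·H_{n−k}(λ^{−1})·H_k(x|λ) holds as an identity of polynomials in x. -/
open Polynomial PowerSeries Finset

theorem frobenius_euler_inverse_lambda_identity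
    (lam : ℂ) (hlam0 : lam ≠ 0) (hlam : lam ≠ 1) (H : ℂ → ℕ → Polynomial ℂ)
    (hH : ∀ mu : ℂ, mu ≠ 1 →
      (PowerSeries.exp (Polynomial ℂ) - PowerSeries.C (Polynomial.C mu)) *
          PowerSeries.mk (fun n => Polynomial.C ((n.factorial : ℂ))⁻¹ * H mu n) =
        PowerSeries.C (Polynomial.C (1 - mu)) *
          PowerSeries.rescale Polynomial.X (PowerSeries.exp (Polynomial ℂ)))
    (n : ℕ) :
    Polynomial.C lam * H lam⁻¹ n + H lam n =
      Polynomial.C (1 + lam) * ∑ k ∈ Finset.range (n + 1),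
        Polynomial.C ((n.choose k : ℂ) * (H lam⁻¹ (n - k)).eval 0) * H lam k := by
  classical
  have hmu : lam⁻¹ ≠ 1 := fun h => hlam (inv_eq_one.mp h)
  set E : PowerSeries (Polynomial ℂ) := PowerSeries.exp (Polynomial ℂ) with hE
  set cc : ℂ →+* PowerSeries (Polynomial ℂ) :=
    (PowerSeries.C (R := Polynomial ℂ)).comp Polynomial.C with hcc
  set φ : Polynomial ℂ →+* Polynomial ℂ :=
    Polynomial.C.comp (Polynomial.evalRingHom (0 : ℂ)) with hφ
  set G : PowerSeries (Polynomial ℂ) := PowerSeries.rescale Polynomial.X E with hG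
  set FM : PowerSeries (Polynomial ℂ) :=
    PowerSeries.mk (fun k => Polynomial.C ((k.factorial : ℂ))⁻¹ * H lam⁻¹ k) with hFM
  set FL : PowerSeries (Polynomial ℂ) :=
    PowerSeries.mk (fun k => Polynomial.C ((k.factorial : ℂ))⁻¹ * H lam k) with hFL
  set N : PowerSeries (Polynomial ℂ) := PowerSeries.map φ FM with hNdef
  have hMeq : (E - cc lam⁻¹) * FM = cc (1 - lam⁻¹) * G := hH lam⁻¹ hmu
  have hLeq : (E - cc lam) * FL = cc (1 - lam) * G := hH lam hlam
  -- map φ kills G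
  have hφC : ∀ p : Polynomial ℂ, φ p = Polynomial.C (p.eval 0) := fun p => rfl
  have hmapG : PowerSeries.map φ G = 1 := by
    ext m
    rw [PowerSeries.coeff_map, hG, PowerSeries.coeff_rescale, hE, PowerSeries.coeff_exp]
    cases m with
    | zero => simp
    | succ m =>
      rw [map_mul, map_pow]
      have : φ Polynomial.X = 0 := by simp [hφC]
      simp [this, PowerSeries.coeff_one]
  have hNeq : (E - cc lam⁻¹) * N = cc (1 - lam⁻¹) := by
    have h := congrArg (PowerSeries.map φ) hMeq
    rw [map_mul, map_sub, map_mul] at h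
    have hmc : ∀ a : ℂ, PowerSeries.map φ (cc a) = cc a := by
      intro a
      rw [hcc]
      simp only [RingHom.comp_apply, PowerSeries.map_C]
      rw [hφC]
      simp
    rw [hmc, hmc, hmapG, mul_one] at h
    have hmexp : PowerSeries.map φ E = E := by rw [hE]; exact PowerSeries.map_exp _
    rw [hmexp] at h
    exact h
  -- key scalar identity
  have hkey : cc (lam * (1 - lam⁻¹)) * (E - cc lam) + cc (1 - lam) * (E - cc lam⁻¹)
      = cc ((1 + lam) * (1 - lam⁻¹) * (1 - lam)) := by
    have expand : cc (lam * (1 - lam⁻¹)) * (E - cc lam) + cc (1 - lam) * (E - cc lam⁻¹)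
        = (cc (lam * (1 - lam⁻¹)) + cc (1 - lam)) * E
          - (cc (lam * (1 - lam⁻¹) * lam) + cc ((1 - lam) * lam⁻¹)) := by
      rw [map_mul cc (lam * (1 - lam⁻¹)) lam, map_mul cc (1 - lam) lam⁻¹]; ring
    have h0 : lam * (1 - lam⁻¹) + (1 - lam) = 0 := by field_simp; ring
    rw [expand, ← map_add, ← map_add, h0, map_zero, zero_mul, zero_sub, ← map_neg]
    congr 1
    field_simp
    ring
  -- nonzeroness
  have hne : ∀ a : ℂ, (E - cc a) ≠ 0 := by
    intro a h
    have h1 : PowerSeries.coeff 1 (E - cc a) = 1 := by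
      rw [map_sub, hE, PowerSeries.coeff_exp]
      simp [hcc, PowerSeries.coeff_C]
    rw [h] at h1
    simp at h1
  -- main power series identity
  have hmain : cc lam * FM + FL = cc (1 + lam) * (FL * N) := by
    apply mul_left_cancel₀ (hne lam⁻¹)
    apply mul_left_cancel₀ (hne lam)
    calc (E - cc lam) * ((E - cc lam⁻¹) * (cc lam * FM + FL))
        = cc lam * ((E - cc lam) * ((E - cc lam⁻¹) * FM))
          + (E - cc lam⁻¹) * ((E - cc lam) * FL) := by ring
      _ = cc lam * ((E - cc lam) * (cc (1 - lam⁻¹) * G))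
          + (E - cc lam⁻¹) * (cc (1 - lam) * G) := by rw [hMeq, hLeq]
      _ = (cc (lam * (1 - lam⁻¹)) * (E - cc lam) + cc (1 - lam) * (E - cc lam⁻¹)) * G := by
          rw [map_mul cc lam (1 - lam⁻¹)]; ring
      _ = cc ((1 + lam) * (1 - lam⁻¹) * (1 - lam)) * G := by rw [hkey]
      _ = cc (1 + lam) * (cc (1 - lam⁻¹) * (cc (1 - lam) * G)) := by
          rw [map_mul cc, map_mul cc]; ring
      _ = cc (1 + lam) * (((E - cc lam⁻¹) * N) * ((E - cc lam) * FL)) := by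
          rw [hNeq, hLeq]
      _ = (E - cc lam) * ((E - cc lam⁻¹) * (cc (1 + lam) * (FL * N))) := by ring
  -- extract coefficient n
  have hc := congrArg (PowerSeries.coeff n) hmain
  rw [map_add] at hc
  have hcoeffN : ∀ k : ℕ, PowerSeries.coeff k N
      = Polynomial.C (((k.factorial : ℂ))⁻¹ * (H lam⁻¹ k).eval 0) := by
    intro k
    rw [hNdef, PowerSeries.coeff_map, hFM, PowerSeries.coeff_mk, hφC]
    simp
  have hccC : ∀ (a : ℂ) (f : PowerSeries (Polynomial ℂ)),
      PowerSeries.coeff n (cc a * f)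
        = Polynomial.C a * PowerSeries.coeff n f := by
    intro a f
    simp [hcc]
  rw [hccC, hccC, hFM, hFL, PowerSeries.coeff_mk, PowerSeries.coeff_mk,
    PowerSeries.coeff_mul] at hc
  simp only [hcoeffN, hFL, PowerSeries.coeff_mk] at hc
  rw [Finset.Nat.sum_antidiagonal_eq_sum_range_succ_mk] at hc
  have hc' : Polynomial.C lam * (Polynomial.C ((n.factorial : ℂ))⁻¹ * H lam⁻¹ n)
      + Polynomial.C ((n.factorial : ℂ))⁻¹ * H lam n
      = Polynomial.C (1 + lam) * ∑ k ∈ Finset.range (n + 1),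
          (Polynomial.C ((k.factorial : ℂ))⁻¹ * H lam k) *
            Polynomial.C ((((n - k).factorial : ℂ))⁻¹ * (H lam⁻¹ (n - k)).eval 0) := hc
  have hfac : ((n.factorial : ℂ))⁻¹ ≠ 0 :=
    inv_ne_zero (Nat.cast_ne_zero.mpr (Nat.factorial_ne_zero n))
  apply mul_left_cancel₀ (show Polynomial.C ((n.factorial : ℂ))⁻¹ ≠ 0 by
    simpa using hfac)
  have hsum : ∀ k ∈ Finset.range (n + 1),
      (Polynomial.C ((k.factorial : ℂ))⁻¹ * H lam k) *
          Polynomial.C ((((n - k).factorial : ℂ))⁻¹ * (H lam⁻¹ (n - k)).eval 0)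
        = Polynomial.C ((n.factorial : ℂ))⁻¹ *
            (Polynomial.C ((n.choose k : ℂ) * (H lam⁻¹ (n - k)).eval 0) * H lam k) := by
    intro k hk
    have hkn : k ≤ n := Nat.lt_succ_iff.mp (Finset.mem_range.mp hk)
    have h1 : ((k.factorial : ℂ)) ≠ 0 := Nat.cast_ne_zero.mpr (Nat.factorial_ne_zero k)
    have h2 : (((n - k).factorial : ℂ)) ≠ 0 :=
      Nat.cast_ne_zero.mpr (Nat.factorial_ne_zero (n - k))
    have h3 : ((n.factorial : ℂ)) ≠ 0 := Nat.cast_ne_zero.mpr (Nat.factorial_ne_zero n)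
    have hch : ((n.factorial : ℂ))⁻¹ * ((n.choose k : ℂ))
        = (((n - k).factorial : ℂ))⁻¹ * ((k.factorial : ℂ))⁻¹ := by
      rw [Nat.cast_choose ℂ hkn]
      field_simp
    have hscal : ((n.factorial : ℂ))⁻¹ * ((n.choose k : ℂ) * (H lam⁻¹ (n - k)).eval 0)
        = ((k.factorial : ℂ))⁻¹ * ((((n - k).factorial : ℂ))⁻¹ * (H lam⁻¹ (n - k)).eval 0) := by
      rw [← mul_assoc, hch]
      ring
    calc (Polynomial.C ((k.factorial : ℂ))⁻¹ * H lam k) *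
          Polynomial.C ((((n - k).factorial : ℂ))⁻¹ * (H lam⁻¹ (n - k)).eval 0)
        = Polynomial.C (((k.factorial : ℂ))⁻¹ *
            ((((n - k).factorial : ℂ))⁻¹ * (H lam⁻¹ (n - k)).eval 0)) * H lam k := by
          simp only [Polynomial.C_mul]
          ring
      _ = Polynomial.C (((n.factorial : ℂ))⁻¹ *
            ((n.choose k : ℂ) * (H lam⁻¹ (n - k)).eval 0)) * H lam k := by rw [hscal]
      _ = Polynomial.C ((n.factorial : ℂ))⁻¹ *
            (Polynomial.C ((n.choose k : ℂ) * (H lam⁻¹ (n - k)).eval 0) * H lam k) := by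
          simp only [Polynomial.C_mul]
          ring
  calc Polynomial.C ((n.factorial : ℂ))⁻¹ * (Polynomial.C lam * H lam⁻¹ n + H lam n)
      = Polynomial.C lam * (Polynomial.C ((n.factorial : ℂ))⁻¹ * H lam⁻¹ n)
        + Polynomial.C ((n.factorial : ℂ))⁻¹ * H lam n := by ring
    _ = Polynomial.C (1 + lam) * ∑ k ∈ Finset.range (n + 1),
          (Polynomial.C ((k.factorial : ℂ))⁻¹ * H lam k) *
            Polynomial.C ((((n - k).factorial : ℂ))⁻¹ * (H lam⁻¹ (n - k)).eval 0) := hc'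
    _ = Polynomial.C (1 + lam) * ∑ k ∈ Finset.range (n + 1),
          Polynomial.C ((n.factorial : ℂ))⁻¹ *
            (Polynomial.C ((n.choose k : ℂ) * (H lam⁻¹ (n - k)).eval 0) * H lam k) := by
        rw [Finset.sum_congr rfl hsum]
    _ = Polynomial.C ((n.factorial : ℂ))⁻¹ * (Polynomial.C (1 + lam) *
          ∑ k ∈ Finset.range (n + 1),
            Polynomial.C ((n.choose k : ℂ) * (H lam⁻¹ (n - k)).eval 0) * H lam k) := by
        rw [← Finset.mul_sum]
        ring
end

section
/- For every λ ∈ ℂ with λ ≠ 1 and every n ∈ ℤ_{≥0}, Σ_{k=0}^{n} (1/(k!·(n−k)!))·H_k(x|λ)·H_{n−k}(x|λ) = Σ_{k=0}^{n−1} (2^k/k!)·( −λ·Σ_{l=k}^{n} H_{l−k}(λ)·H_{n−l}(λ)/((l−k)!·(n−l)!) + 2λ·H_{n−k}(λ)/(n−k)! )·H_k(x|λ) + (2^n/n!)·H_n(x|λ), as an identity of polynomials in x (for n = 0 the sum over k from 0 to n−1 is empty). -/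
open Polynomial PowerSeries Finset

theorem frobenius_euler_weighted_product_sum_identity
    (lam : ℂ) (hlam : lam ≠ 1) (H : ℕ → Polynomial ℂ)
    (hH : (PowerSeries.exp (Polynomial ℂ) - PowerSeries.C (Polynomial.C lam)) *
        PowerSeries.mk (fun n => Polynomial.C ((n.factorial : ℂ))⁻¹ * H n) =
      PowerSeries.C (Polynomial.C (1 - lam)) *
        PowerSeries.rescale Polynomial.X (PowerSeries.exp (Polynomial ℂ)))
    (n : ℕ) :
    (∑ k ∈ Finset.range (n + 1),
        Polynomial.C (((k.factorial : ℂ) * ((n - k).factorial : ℂ))⁻¹) * (H k * H (n - k))) =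
      (∑ k ∈ Finset.range n,
        Polynomial.C ((2 ^ k / (k.factorial : ℂ)) *
          (-lam * ∑ l ∈ Finset.Icc k n,
              (H (l - k)).eval 0 * (H (n - l)).eval 0 /
                (((l - k).factorial : ℂ) * ((n - l).factorial : ℂ)) +
            2 * lam * (H (n - k)).eval 0 / ((n - k).factorial : ℂ))) * H k) +
      Polynomial.C ((2 ^ n : ℂ) / (n.factorial : ℂ)) * H n := by
  classical
  have h1lam : (1 : ℂ) - lam ≠ 0 := sub_ne_zero.mpr (Ne.symm hlam)
  set Λ : PowerSeries (Polynomial ℂ) := PowerSeries.C (Polynomial.C lam) with hΛdef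
  set μ : PowerSeries (Polynomial ℂ) := PowerSeries.C (Polynomial.C (1 - lam)) with hμdef
  set E : PowerSeries (Polynomial ℂ) := PowerSeries.exp (Polynomial ℂ) with hEdef
  set F : PowerSeries (Polynomial ℂ) :=
    PowerSeries.mk (fun n => Polynomial.C ((n.factorial : ℂ))⁻¹ * H n) with hFdef
  set G : PowerSeries (Polynomial ℂ) :=
    PowerSeries.mk (fun m => Polynomial.C (((m.factorial : ℂ))⁻¹ * (H m).eval 0)) with hGdef
  have hμΛ : μ = 1 - Λ := by
    rw [hμdef, hΛdef, map_sub, map_sub, map_one, map_one]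
  -- the ring hom evaluating each coefficient at 0 and re-embedding
  set φ : Polynomial ℂ →+* Polynomial ℂ := Polynomial.C.comp (Polynomial.evalRingHom 0) with hφdef
  -- map φ of the hypothesis
  have hmapF : PowerSeries.map φ F = G := by
    ext m
    simp [hφdef, hFdef, hGdef, PowerSeries.coeff_map]
  have hmapres : PowerSeries.map φ (PowerSeries.rescale Polynomial.X E) = 1 := by
    ext m
    rw [PowerSeries.coeff_map, PowerSeries.coeff_rescale, map_mul, map_pow]
    have hφX : φ Polynomial.X = 0 := by simp [hφdef]
    cases m with
    | zero => simp [hφX, hEdef, PowerSeries.coeff_one]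
    | succ m => simp [hφX, PowerSeries.coeff_one]
  have h2 : (E - Λ) * G = μ := by
    have h := congrArg (PowerSeries.map φ) hH
    rw [map_mul, map_sub, map_mul, PowerSeries.map_C, PowerSeries.map_C, hmapF, hmapres,
      mul_one] at h
    have hφlam : φ (Polynomial.C lam) = Polynomial.C lam := by simp [hφdef]
    have hφ1lam : φ (Polynomial.C (1 - lam)) = Polynomial.C (1 - lam) := by simp [hφdef]
    rw [hφlam, hφ1lam] at h
    rw [hEdef] at h ⊢
    rw [PowerSeries.map_exp] at h
    exact h
  -- rescaling lemmas
  have hresC : ∀ (a : Polynomial ℂ) (r : Polynomial ℂ),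
      PowerSeries.rescale a (PowerSeries.C r) = PowerSeries.C r := by
    intro a r
    refine PowerSeries.ext fun m => ?_
    rw [PowerSeries.coeff_rescale, PowerSeries.coeff_C]
    cases m with
    | zero => simp
    | succ m => simp
  have h3 : (PowerSeries.rescale 2 E - Λ) * PowerSeries.rescale 2 F =
      μ * PowerSeries.rescale (Polynomial.X * 2) E := by
    have h := congrArg (PowerSeries.rescale (2 : Polynomial ℂ)) hH
    rw [map_mul, map_sub, map_mul] at h
    rw [hΛdef, hμdef, hresC, hresC, PowerSeries.rescale_rescale] at h
    exact h
  have hE2 : E * E = PowerSeries.rescale 2 E := by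
    have h := PowerSeries.exp_mul_exp_eq_exp_add (1 : Polynomial ℂ) 1
    rw [PowerSeries.rescale_one] at h
    norm_num at h
    rw [hEdef]
    exact h
  have hXX : PowerSeries.rescale Polynomial.X E * PowerSeries.rescale Polynomial.X E =
      PowerSeries.rescale (Polynomial.X * 2) E := by
    have h := PowerSeries.exp_mul_exp_eq_exp_add (Polynomial.X : Polynomial ℂ) Polynomial.X
    have hx : (Polynomial.X : Polynomial ℂ) + Polynomial.X = Polynomial.X * 2 := by ring
    rw [hx] at h
    rw [hEdef]
    exact h
  have hD0 : E - Λ ≠ 0 := by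
    intro hcon
    have h := congrArg (PowerSeries.constantCoeff) hcon
    rw [map_sub, hΛdef, PowerSeries.constantCoeff_C, hEdef, PowerSeries.constantCoeff_exp,
      map_zero] at h
    have : Polynomial.C lam = 1 := by linear_combination -h
    have : lam = 1 := by
      have := congrArg (Polynomial.eval 0) this
      simpa using this
    exact hlam this
  set A : PowerSeries (Polynomial ℂ) :=
    μ + PowerSeries.C (Polynomial.C (2 * lam)) * G - Λ * (G * G) with hAdef
  have h2lam : PowerSeries.C (Polynomial.C (2 * lam)) = 2 * Λ := by
    rw [hΛdef, map_mul, map_mul, map_ofNat, map_ofNat]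
  have keyA : (E - Λ) ^ 2 * A = μ * (PowerSeries.rescale 2 E - Λ) := by
    calc (E - Λ) ^ 2 * A
        = μ * (E - Λ) ^ 2 + 2 * Λ * (E - Λ) * ((E - Λ) * G) -
            Λ * (((E - Λ) * G) * ((E - Λ) * G)) := by rw [hAdef, h2lam]; ring
      _ = μ * (E - Λ) ^ 2 + 2 * Λ * (E - Λ) * μ - Λ * (μ * μ) := by rw [h2]
      _ = μ * (E * E - Λ) := by rw [hμΛ]; ring
      _ = μ * (PowerSeries.rescale 2 E - Λ) := by rw [hE2]
  have key : (E - Λ) ^ 2 * (F * F) = (E - Λ) ^ 2 * (A * PowerSeries.rescale 2 F) := by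
    calc (E - Λ) ^ 2 * (F * F) = ((E - Λ) * F) * ((E - Λ) * F) := by ring
      _ = (μ * PowerSeries.rescale Polynomial.X E) * (μ * PowerSeries.rescale Polynomial.X E) := by
          rw [hH]
      _ = μ * (μ * (PowerSeries.rescale Polynomial.X E * PowerSeries.rescale Polynomial.X E)) := by
          ring
      _ = μ * (μ * PowerSeries.rescale (Polynomial.X * 2) E) := by rw [hXX]
      _ = μ * ((PowerSeries.rescale 2 E - Λ) * PowerSeries.rescale 2 F) := by rw [h3]
      _ = (μ * (PowerSeries.rescale 2 E - Λ)) * PowerSeries.rescale 2 F := by ring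
      _ = ((E - Λ) ^ 2 * A) * PowerSeries.rescale 2 F := by rw [keyA]
      _ = (E - Λ) ^ 2 * (A * PowerSeries.rescale 2 F) := by ring
  have hmain : F * F = A * PowerSeries.rescale 2 F :=
    mul_left_cancel₀ (pow_ne_zero 2 hD0) key
  -- constant term: H 0 = 1
  have hH0 : H 0 = 1 := by
    have h := congrArg (PowerSeries.constantCoeff) hH
    rw [map_mul, map_mul, map_sub, hΛdef, hμdef, PowerSeries.constantCoeff_C,
      PowerSeries.constantCoeff_C, hEdef, PowerSeries.constantCoeff_exp, hFdef] at h
    rw [PowerSeries.constantCoeff_mk] at h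
    have hres0 : PowerSeries.constantCoeff
        (PowerSeries.rescale Polynomial.X (PowerSeries.exp (Polynomial ℂ))) = 1 := by
      rw [← PowerSeries.coeff_zero_eq_constantCoeff_apply, PowerSeries.coeff_rescale]
      simp
    rw [hres0, mul_one] at h
    simp only [Nat.factorial_zero, Nat.cast_one, inv_one, map_one, one_mul] at h
    have hC : (1 : Polynomial ℂ) - Polynomial.C lam = Polynomial.C (1 - lam) := by
      rw [map_sub, map_one]
    rw [hC] at h
    have hCne : (Polynomial.C (1 - lam) : Polynomial ℂ) ≠ 0 :=
      Polynomial.C_ne_zero.mpr h1lam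
    have := mul_left_cancel₀ hCne (h.trans (mul_one _).symm)
    exact this
  have hh0 : (H 0).eval 0 = 1 := by rw [hH0]; simp
  -- coefficient extraction
  have hcoeff : PowerSeries.coeff n (F * F) =
      (∑ k ∈ Finset.range n, PowerSeries.coeff k (PowerSeries.rescale 2 F) *
        PowerSeries.coeff (n - k) A) +
      PowerSeries.coeff n (PowerSeries.rescale 2 F) *
        PowerSeries.coeff 0 A := by
    rw [hmain, mul_comm A, PowerSeries.coeff_mul,
      Finset.Nat.sum_antidiagonal_eq_sum_range_succ_mk, Finset.sum_range_succ, Nat.sub_self]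
  -- identify the left side
  have hL : PowerSeries.coeff n (F * F) =
      ∑ k ∈ Finset.range (n + 1),
        Polynomial.C (((k.factorial : ℂ) * ((n - k).factorial : ℂ))⁻¹) * (H k * H (n - k)) := by
    rw [PowerSeries.coeff_mul, Finset.Nat.sum_antidiagonal_eq_sum_range_succ_mk]
    refine Finset.sum_congr rfl fun k _ => ?_
    rw [hFdef]
    simp only [PowerSeries.coeff_mk]
    rw [mul_inv, map_mul]
    ring
  -- coefficient of A at 0
  have hA0 : PowerSeries.coeff 0 A = 1 := by
    rw [PowerSeries.coeff_zero_eq_constantCoeff_apply, hAdef, hμdef, hΛdef, hGdef]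
    simp only [map_sub, map_add, map_mul, PowerSeries.constantCoeff_C,
      PowerSeries.constantCoeff_mk, hh0, Nat.factorial_zero, Nat.cast_one, inv_one, one_mul,
      mul_one]
    simp only [← Polynomial.C_mul, ← Polynomial.C_add, ← Polynomial.C_sub, map_one, Polynomial.C_1]
    rw [← Polynomial.C_1]
    simp only [← Polynomial.C_mul, ← Polynomial.C_add, ← Polynomial.C_sub]
    congr 1
    ring
  -- coefficient of A at m ≥ 1
  have hA : ∀ m : ℕ, m ≠ 0 → PowerSeries.coeff m A =
      Polynomial.C (2 * lam * ((m.factorial : ℂ))⁻¹ * (H m).eval 0 -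
        lam * ∑ j ∈ Finset.range (m + 1),
          ((j.factorial : ℂ))⁻¹ * (H j).eval 0 *
            ((((m - j).factorial : ℂ))⁻¹ * (H (m - j)).eval 0)) := by
    intro m hm
    rw [hAdef, hμdef, hΛdef, hGdef]
    simp only [map_sub, map_add, PowerSeries.coeff_C_mul]
    rw [PowerSeries.coeff_C, if_neg hm]
    rw [PowerSeries.coeff_mul, Finset.Nat.sum_antidiagonal_eq_sum_range_succ_mk]
    simp only [PowerSeries.coeff_mk]
    simp only [PowerSeries.coeff_C, if_neg hm, neg_zero, zero_add, ← Polynomial.C_mul,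
      ← map_sum, sub_zero, zero_sub, neg_neg]
    simp only [Nat.succ_eq_add_one]
    congr 2
    ring
  -- coefficient of rescale 2 F
  have hrF : ∀ k : ℕ, PowerSeries.coeff k (PowerSeries.rescale 2 F) =
      Polynomial.C ((2 : ℂ) ^ k * ((k.factorial : ℂ))⁻¹) * H k := by
    intro k
    rw [PowerSeries.coeff_rescale, hFdef]
    simp only [PowerSeries.coeff_mk]
    rw [map_mul, map_pow, map_ofNat]
    ring
  rw [← hL, hcoeff, hA0, mul_one, hrF]
  have hlast : Polynomial.C ((2:ℂ) ^ n * ((n.factorial : ℂ))⁻¹) * H n =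
      Polynomial.C ((2 ^ n : ℂ) / (n.factorial : ℂ)) * H n := by
    rw [div_eq_mul_inv]
  rw [hlast]
  congr 1
  · refine Finset.sum_congr rfl fun k hk => ?_
    rw [Finset.mem_range] at hk
    have hnk : n - k ≠ 0 := by omega
    rw [hrF, hA _ hnk, mul_right_comm, ← map_mul]
    congr 1
    have hIcc : (∑ l ∈ Finset.Icc k n,
        (H (l - k)).eval 0 * (H (n - l)).eval 0 /
          (((l - k).factorial : ℂ) * ((n - l).factorial : ℂ))) =
        ∑ j ∈ Finset.range (n - k + 1),
          (H j).eval 0 * (H (n - k - j)).eval 0 /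
            ((j.factorial : ℂ) * (((n - k - j).factorial : ℂ))) := by
      rw [← Finset.Ico_add_one_right_eq_Icc, Finset.sum_Ico_eq_sum_range]
      have hcard : n + 1 - k = n - k + 1 := by omega
      rw [hcard]
      refine Finset.sum_congr rfl fun j hj => ?_
      have h1 : k + j - k = j := by omega
      have h2 : n - (k + j) = n - k - j := by omega
      rw [h1, h2]
    have hsum : (∑ j ∈ Finset.range (n - k + 1),
        ((j.factorial : ℂ))⁻¹ * (H j).eval 0 *
          ((((n - k - j).factorial : ℂ))⁻¹ * (H (n - k - j)).eval 0)) =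
        ∑ j ∈ Finset.range (n - k + 1),
          (H j).eval 0 * (H (n - k - j)).eval 0 /
            ((j.factorial : ℂ) * (((n - k - j).factorial : ℂ))) := by
      refine Finset.sum_congr rfl fun j _ => ?_
      rw [div_eq_mul_inv, mul_inv]
      ring
    rw [hIcc, ← hsum]
    ring
end

section
/- Let λ ∈ ℂ with λ ≠ 1, let r ∈ ℤ_{≥0}, let n ∈ ℤ_{≥0}, and let p(x) be a complex polynomial of degree at most n written as p(x) = Σ_{k=0}^{n} C_k H_k^{(r)}(x|λ). Then for every 0 ≤ k ≤ n, C_k = (1/((1−λ)^r·k!))·Σ_{j=0}^{r} binom(r,j)·(−λ)^{r−j}·p^{(k)}(j), where p^{(k)} denotes the k-th derivative of p; equivalently, p(x) = Σ_{k=0}^{n} ( (1/((1−λ)^r·k!))·Σ_{j=0}^{r} binom(r,j)·(−λ)^{r−j}·p^{(k)}(j) )·H_k^{(r)}(x|λ). -/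
open Polynomial PowerSeries Finset

private lemma feh_coeffA (lam : ℂ) (r i : ℕ) :
    PowerSeries.coeff i
      ((PowerSeries.exp (Polynomial ℂ) - PowerSeries.C (Polynomial.C lam)) ^ r) =
    Polynomial.C ((∑ j ∈ Finset.range (r+1), (r.choose j : ℂ) * (-lam)^(r-j) * (j:ℂ)^i) * ((i.factorial : ℂ))⁻¹) := by
  rw [sub_eq_add_neg, add_pow, map_sum, Finset.sum_mul, map_sum]
  refine Finset.sum_congr rfl fun j hj => ?_
  rw [PowerSeries.exp_pow_eq_rescale_exp]
  have h1 : (-PowerSeries.C (Polynomial.C lam)) ^ (r - j) =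
      PowerSeries.C (Polynomial.C ((-lam)^(r-j))) := by
    rw [← map_neg, ← map_neg, ← map_pow, ← map_pow]
  have h2 : ((r.choose j : ℕ) : PowerSeries (Polynomial ℂ)) =
      PowerSeries.C (Polynomial.C ((r.choose j : ℂ))) := by
    rfl
  rw [h1, h2, mul_assoc, ← map_mul, PowerSeries.coeff_mul_C, PowerSeries.coeff_rescale,
    PowerSeries.coeff_exp]
  have h3 : (algebraMap ℚ (Polynomial ℂ)) (1 / i.factorial) = Polynomial.C ((i.factorial : ℂ))⁻¹ := by
    rw [IsScalarTower.algebraMap_apply ℚ ℂ (Polynomial ℂ), Polynomial.algebraMap_eq]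
    norm_num
  have h4 : ((j : ℕ) : Polynomial ℂ) = Polynomial.C ((j:ℂ)) := by
    simp
  rw [h3, h4, ← map_pow, ← map_mul, ← map_mul, ← map_mul]
  ring_nf

private lemma feh_cancel (lam : ℂ) (hlam : lam ≠ 1) (r k : ℕ) (Sp : ℕ → ℂ) (φ : ℕ → ℂ)
    (hSp0 : Sp 0 = (1 - lam)^r)
    (key : ∀ m, ∑ ij ∈ Finset.HasAntidiagonal.antidiagonal m, (Sp ij.1 * ((ij.1.factorial : ℂ))⁻¹) * (((ij.2.factorial : ℂ))⁻¹ * φ ij.2) =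
      (1 - lam)^r * ((m.factorial : ℂ))⁻¹ * ((m.descFactorial k : ℂ) * Sp (m-k))) :
    ∀ m, φ m = if m = k then (1 - lam)^r * (k.factorial : ℂ) else 0 := by
  have hlam' : (1 : ℂ) - lam ≠ 0 := sub_ne_zero.mpr (Ne.symm hlam)
  set B : PowerSeries ℂ := PowerSeries.mk (fun i => Sp i * ((i.factorial : ℂ))⁻¹) with hB
  set S : PowerSeries ℂ := PowerSeries.mk (fun l => ((l.factorial : ℂ))⁻¹ * φ l) with hS
  have hBS : B * S = B * (PowerSeries.C ((1-lam)^r) * (PowerSeries.X)^k) := by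
    ext m
    rw [PowerSeries.coeff_mul]
    simp only [hB, hS, PowerSeries.coeff_mk]
    rw [key m, mul_left_comm B, PowerSeries.coeff_C_mul, PowerSeries.coeff_mul_X_pow']
    by_cases hkm : k ≤ m
    · rw [if_pos hkm, PowerSeries.coeff_mk]
      have h2 : ((m-k).factorial * m.descFactorial k : ℂ) = (m.factorial : ℂ) := by
        rw [← Nat.cast_mul, Nat.factorial_mul_descFactorial hkm]
      have hfm : ((m.factorial : ℂ)) ≠ 0 := Nat.cast_ne_zero.mpr m.factorial_ne_zero
      have hfmk : (((m-k).factorial : ℂ)) ≠ 0 := Nat.cast_ne_zero.mpr (m-k).factorial_ne_zero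
      field_simp
      linear_combination (Sp (m-k)) * h2
    · rw [if_neg hkm]
      have : m.descFactorial k = 0 := Nat.descFactorial_eq_zero_iff_lt.mpr (lt_of_not_ge hkm)
      rw [this]; push_cast; ring
  have hBne : B ≠ 0 := by
    intro h0
    have h1 := congrArg (PowerSeries.constantCoeff) h0
    simp only [hB, ← PowerSeries.coeff_zero_eq_constantCoeff, PowerSeries.coeff_mk, map_zero] at h1
    rw [hSp0] at h1
    simp at h1
    exact pow_ne_zero r hlam' (by simpa using h1)
  have hSC : S = PowerSeries.C ((1-lam)^r) * (PowerSeries.X)^k := mul_left_cancel₀ hBne hBS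
  intro m
  have hcm := congrArg (PowerSeries.coeff m) hSC
  rw [PowerSeries.coeff_C_mul, PowerSeries.coeff_X_pow] at hcm
  simp only [hS, PowerSeries.coeff_mk] at hcm
  have hf : ((m.factorial : ℂ)) ≠ 0 := Nat.cast_ne_zero.mpr m.factorial_ne_zero
  by_cases hmk : m = k
  · subst hmk
    rw [if_pos rfl] at hcm ⊢
    field_simp at hcm
    linear_combination hcm
  · simp only [if_neg hmk] at hcm ⊢
    field_simp at hcm
    simpa using hcm

private lemma feh_phi (lam : ℂ) (hlam : lam ≠ 1) (H : ℕ → ℕ → Polynomial ℂ)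
    (hH : ∀ r : ℕ,
      (PowerSeries.exp (Polynomial ℂ) - (PowerSeries.C : Polynomial ℂ →+* PowerSeries (Polynomial ℂ)) (Polynomial.C lam)) ^ r *
          PowerSeries.mk (fun n => Polynomial.C ((n.factorial : ℂ))⁻¹ * H r n) =
        (PowerSeries.C : Polynomial ℂ →+* PowerSeries (Polynomial ℂ)) (Polynomial.C ((1 - lam) ^ r)) *
          PowerSeries.rescale Polynomial.X (PowerSeries.exp (Polynomial ℂ)))
    (r k : ℕ) :
    ∀ m, (∑ j ∈ Finset.range (r+1), (r.choose j : ℂ) * (-lam)^(r-j) *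
        (Polynomial.derivative^[k] (H r m)).eval (j:ℂ)) =
      if m = k then (1 - lam)^r * (k.factorial : ℂ) else 0 := by
  obtain ⟨W, hW⟩ : ∃ W : ℕ → ℂ, ∀ j, W j = (r.choose j : ℂ) * (-lam)^(r-j) := ⟨_, fun _ => rfl⟩
  obtain ⟨Sp, hSp⟩ : ∃ Sp : ℕ → ℂ, ∀ s, Sp s = ∑ j ∈ Finset.range (r+1), W j * (j:ℂ)^s :=
    ⟨_, fun _ => rfl⟩
  obtain ⟨φ, hφd⟩ : ∃ φ : ℕ → ℂ, ∀ l, φ l = ∑ j ∈ Finset.range (r+1), W j *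
      (Polynomial.derivative^[k] (H r l)).eval (j:ℂ) := ⟨_, fun _ => rfl⟩
  -- β coefficients
  have hβ : ∀ i, PowerSeries.coeff i
      ((PowerSeries.exp (Polynomial ℂ) - PowerSeries.C (Polynomial.C lam)) ^ r) =
      Polynomial.C (Sp i * ((i.factorial : ℂ))⁻¹) := by
    intro i
    rw [feh_coeffA, hSp]
    congr 2
    exact Finset.sum_congr rfl fun j _ => by rw [hW]
  -- Step B
  have star : ∀ m, ∑ ij ∈ Finset.HasAntidiagonal.antidiagonal m,
      Polynomial.C (Sp ij.1 * ((ij.1.factorial : ℂ))⁻¹ * ((ij.2.factorial : ℂ))⁻¹) * H r ij.2 =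
      Polynomial.C ((1 - lam)^r * ((m.factorial : ℂ))⁻¹) * Polynomial.X ^ m := by
    intro m
    have h := congrArg (PowerSeries.coeff m) (hH r)
    rw [PowerSeries.coeff_mul] at h
    simp only [PowerSeries.coeff_mk, hβ] at h
    rw [PowerSeries.coeff_C_mul, PowerSeries.coeff_rescale, PowerSeries.coeff_exp] at h
    have h3 : (algebraMap ℚ (Polynomial ℂ)) (1 / m.factorial) = Polynomial.C ((m.factorial : ℂ))⁻¹ := by
      rw [IsScalarTower.algebraMap_apply ℚ ℂ (Polynomial ℂ), Polynomial.algebraMap_eq]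
      norm_num
    rw [h3] at h
    calc ∑ ij ∈ Finset.HasAntidiagonal.antidiagonal m,
        Polynomial.C (Sp ij.1 * ((ij.1.factorial : ℂ))⁻¹ * ((ij.2.factorial : ℂ))⁻¹) * H r ij.2
        = ∑ ij ∈ Finset.HasAntidiagonal.antidiagonal m, Polynomial.C (Sp ij.1 * ((ij.1.factorial : ℂ))⁻¹) *
            (Polynomial.C ((ij.2.factorial : ℂ))⁻¹ * H r ij.2) := by
          refine Finset.sum_congr rfl fun ij _ => ?_
          rw [map_mul, mul_assoc]
      _ = Polynomial.C ((1 - lam)^r * ((m.factorial : ℂ))⁻¹) * Polynomial.X ^ m := by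
          rw [h, map_mul]; ring
  -- Step C
  have key : ∀ m, ∑ ij ∈ Finset.HasAntidiagonal.antidiagonal m,
      (Sp ij.1 * ((ij.1.factorial : ℂ))⁻¹) * (((ij.2.factorial : ℂ))⁻¹ * φ ij.2) =
      (1 - lam)^r * ((m.factorial : ℂ))⁻¹ * ((m.descFactorial k : ℂ) * Sp (m-k)) := by
    intro m
    have h := congrArg (fun q : Polynomial ℂ =>
      ∑ j ∈ Finset.range (r+1), W j * (Polynomial.derivative^[k] q).eval (j:ℂ)) (star m)
    simp only [Polynomial.iterate_derivative_sum, Polynomial.iterate_derivative_C_mul,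
      Polynomial.eval_finset_sum, Polynomial.eval_mul, Polynomial.eval_C, Finset.mul_sum,
      Polynomial.iterate_derivative_X_pow_eq_C_mul, Polynomial.eval_pow, Polynomial.eval_X,
      Polynomial.eval_natCast] at h
    rw [Finset.sum_comm (s := Finset.range (r+1)) (t := Finset.HasAntidiagonal.antidiagonal m)] at h
    calc ∑ ij ∈ Finset.HasAntidiagonal.antidiagonal m,
        (Sp ij.1 * ((ij.1.factorial : ℂ))⁻¹) * (((ij.2.factorial : ℂ))⁻¹ * φ ij.2)
        = ∑ ij ∈ Finset.HasAntidiagonal.antidiagonal m, ∑ j ∈ Finset.range (r+1),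
            W j * (Sp ij.1 * ((ij.1.factorial : ℂ))⁻¹ * ((ij.2.factorial : ℂ))⁻¹ *
              (Polynomial.derivative^[k] (H r ij.2)).eval (j:ℂ)) := by
          refine Finset.sum_congr rfl fun ij _ => ?_
          rw [hφd]
          simp only [Finset.mul_sum]
          refine Finset.sum_congr rfl fun j _ => ?_
          ring
      _ = (1 - lam)^r * ((m.factorial : ℂ))⁻¹ * ((m.descFactorial k : ℂ) * Sp (m-k)) := by
          rw [h, hSp]
          simp only [Finset.mul_sum]
          refine Finset.sum_congr rfl fun j _ => ?_
          ring
  -- constant coefficient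
  have hSp0 : Sp 0 = (1 - lam)^r := by
    rw [hSp]
    rw [show (1:ℂ) - lam = 1 + (-lam) by ring, add_pow]
    refine (Finset.sum_congr rfl fun j _ => ?_).symm
    rw [hW, one_pow]
    ring
  have hφ := feh_cancel lam hlam r k Sp φ hSp0 key
  intro m
  rw [← hφ m, hφd m]
  exact Finset.sum_congr rfl fun j _ => by rw [hW]

theorem frobenius_euler_higher_order_coefficients
    (lam : ℂ) (hlam : lam ≠ 1) (H : ℕ → ℕ → Polynomial ℂ)
    (hH : ∀ r : ℕ,
      (PowerSeries.exp (Polynomial ℂ) - (PowerSeries.C : Polynomial ℂ →+* PowerSeries (Polynomial ℂ)) (Polynomial.C lam)) ^ r *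
          PowerSeries.mk (fun n => Polynomial.C ((n.factorial : ℂ))⁻¹ * H r n) =
        (PowerSeries.C : Polynomial ℂ →+* PowerSeries (Polynomial ℂ)) (Polynomial.C ((1 - lam) ^ r)) *
          PowerSeries.rescale Polynomial.X (PowerSeries.exp (Polynomial ℂ)))
    (r : ℕ) (n : ℕ) (p : Polynomial ℂ) (hp : p.degree ≤ n) (Cc : ℕ → ℂ)
    (hC : p = ∑ k ∈ Finset.range (n + 1), Polynomial.C (Cc k) * H r k)
    (k : ℕ) (hk : k ≤ n) :
    Cc k = (1 / ((1 - lam) ^ r * (k.factorial : ℂ))) *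
      ∑ j ∈ Finset.range (r + 1),
        (r.choose j : ℂ) * (-lam) ^ (r - j) * (Polynomial.derivative^[k] p).eval (j : ℂ) := by
  have hφ := feh_phi lam hlam H hH r k
  have hΦp : ∑ j ∈ Finset.range (r + 1),
      (r.choose j : ℂ) * (-lam) ^ (r - j) * (Polynomial.derivative^[k] p).eval (j : ℂ) =
      Cc k * ((1 - lam)^r * (k.factorial : ℂ)) := by
    calc ∑ j ∈ Finset.range (r + 1),
        (r.choose j : ℂ) * (-lam) ^ (r - j) * (Polynomial.derivative^[k] p).eval (j : ℂ)
        = ∑ m ∈ Finset.range (n + 1), Cc m * ∑ j ∈ Finset.range (r + 1),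
            (r.choose j : ℂ) * (-lam) ^ (r - j) *
              (Polynomial.derivative^[k] (H r m)).eval (j : ℂ) := by
          rw [hC]
          simp only [Polynomial.iterate_derivative_sum, Polynomial.iterate_derivative_C_mul,
            Polynomial.eval_finset_sum, Polynomial.eval_mul, Polynomial.eval_C, Finset.mul_sum]
          rw [Finset.sum_comm]
          refine Finset.sum_congr rfl fun m _ => ?_
          refine Finset.sum_congr rfl fun j _ => ?_
          ring
      _ = Cc k * ((1 - lam)^r * (k.factorial : ℂ)) := by
          rw [Finset.sum_congr rfl fun m (_ : m ∈ Finset.range (n+1)) => by rw [hφ m]]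
          rw [Finset.sum_eq_single k]
          · rw [if_pos rfl]
          · intro m _ hmk
            rw [if_neg hmk, mul_zero]
          · intro hkn
            exact absurd (Finset.mem_range.mpr (Nat.lt_succ_of_le hk)) hkn
  rw [hΦp]
  have hlam' : (1 : ℂ) - lam ≠ 0 := sub_ne_zero.mpr (Ne.symm hlam)
  have hf : ((k.factorial : ℂ)) ≠ 0 := Nat.cast_ne_zero.mpr k.factorial_ne_zero
  field_simp
end

section
/- For every λ ∈ ℂ with λ ≠ 1, every r ∈ ℤ_{≥0} and every n ∈ ℤ_{≥0}, H_n(x|λ) = (1/(1−λ)^r)·Σ_{k=0}^{n} binom(n,k)·( Σ_{j=0}^{r} binom(r,j)·(−λ)^{r−j}·H_{n−k}(j|λ) )·H_k^{(r)}(x|λ), as an identity of polynomials in x, where H_{n−k}(j|λ) is the Frobenius–Euler polynomial H_{n−k}(x|λ) evaluated at x = j. -/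
open Polynomial PowerSeries Finset

noncomputable def feφ (j : ℕ) : Polynomial ℂ →+* Polynomial ℂ :=
  (Polynomial.C).comp (Polynomial.evalRingHom (j : ℂ))

lemma feφ_C (j : ℕ) (a : ℂ) : feφ j (Polynomial.C a) = Polynomial.C a := by
  simp [feφ]

lemma map_feφ_exp (j : ℕ) :
    PowerSeries.map (feφ j) (PowerSeries.exp (Polynomial ℂ)) = PowerSeries.exp (Polynomial ℂ) := by
  ext n
  simp [PowerSeries.coeff_map, PowerSeries.coeff_exp, Polynomial.algebraMap_apply, feφ]

lemma map_feφ_rescaleX (j : ℕ) :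
    PowerSeries.map (feφ j) (PowerSeries.rescale Polynomial.X (PowerSeries.exp (Polynomial ℂ)))
      = PowerSeries.exp (Polynomial ℂ) ^ j := by
  rw [PowerSeries.exp_pow_eq_rescale_exp]
  ext n
  rw [PowerSeries.coeff_map, PowerSeries.coeff_rescale, PowerSeries.coeff_rescale,
    PowerSeries.coeff_exp]
  simp only [feφ, RingHom.coe_comp, Function.comp_apply, Polynomial.coe_evalRingHom,
    Polynomial.algebraMap_apply, Polynomial.eval_mul, Polynomial.eval_pow, Polynomial.eval_X,
    Polynomial.eval_C, map_mul, map_pow, Polynomial.C_pow]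
  rw [map_natCast Polynomial.C j]

theorem frobenius_euler_in_terms_of_higher_order
    (lam : ℂ) (hlam : lam ≠ 1) (H : ℕ → ℕ → Polynomial ℂ)
    (hH : ∀ r : ℕ,
      (PowerSeries.exp (Polynomial ℂ) - PowerSeries.C (Polynomial.C lam)) ^ r *
          PowerSeries.mk (fun n => Polynomial.C ((n.factorial : ℂ))⁻¹ * H r n) =
        PowerSeries.C (Polynomial.C ((1 - lam) ^ r)) *
          PowerSeries.rescale Polynomial.X (PowerSeries.exp (Polynomial ℂ)))
    (r : ℕ) (n : ℕ) :
    H 1 n = Polynomial.C (((1 - lam) ^ r)⁻¹) *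
      ∑ k ∈ Finset.range (n + 1),
        Polynomial.C ((n.choose k : ℂ) *
          ∑ j ∈ Finset.range (r + 1),
            (r.choose j : ℂ) * (-lam) ^ (r - j) * (H 1 (n - k)).eval (j : ℂ)) * H r k := by
  classical
  have hone : (1 : ℂ) - lam ≠ 0 := sub_ne_zero.mpr (Ne.symm hlam)
  set A : PowerSeries (Polynomial ℂ) :=
    PowerSeries.exp (Polynomial ℂ) - PowerSeries.C (Polynomial.C lam) with hA
  set E : PowerSeries (Polynomial ℂ) :=
    PowerSeries.rescale Polynomial.X (PowerSeries.exp (Polynomial ℂ)) with hE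
  set S : ℕ → PowerSeries (Polynomial ℂ) :=
    fun r => PowerSeries.mk fun n => Polynomial.C ((n.factorial : ℂ))⁻¹ * H r n with hS
  have hA0 : A ≠ 0 := by
    intro h
    have h0 : PowerSeries.constantCoeff A = 0 := by rw [h]; simp
    rw [hA] at h0
    simp only [map_sub, PowerSeries.constantCoeff_exp, PowerSeries.constantCoeff_C] at h0
    have : Polynomial.C ((1:ℂ) - lam) = 0 := by
      rw [map_sub]; simpa using h0
    exact hone (by simpa using Polynomial.C_eq_zero.mp this)
  -- step 1 : A * map (feφ j) (S 1) = C (C (1 - lam)) * exp ^ j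
  have hmap : ∀ j : ℕ, A * PowerSeries.map (feφ j) (S 1) =
      PowerSeries.C (Polynomial.C (1 - lam)) * PowerSeries.exp (Polynomial ℂ) ^ j := by
    intro j
    have h1 := hH 1
    rw [pow_one] at h1
    have h2 := congrArg (PowerSeries.map (feφ j)) h1
    rw [map_mul, map_mul, PowerSeries.map_C] at h2
    have hmapA : PowerSeries.map (feφ j) A = A := by
      rw [hA, map_sub, map_feφ_exp, PowerSeries.map_C, feφ_C]
    rw [hmapA, feφ_C, pow_one, map_feφ_rescaleX] at h2
    exact h2
  -- step 2: A * I = C(C(1-lam)) * A^r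
  set I : PowerSeries (Polynomial ℂ) :=
    ∑ j ∈ Finset.range (r + 1),
      PowerSeries.C (Polynomial.C ((r.choose j : ℂ) * (-lam) ^ (r - j))) *
        PowerSeries.map (feφ j) (S 1) with hI
  have hpow : A ^ r = ∑ j ∈ Finset.range (r + 1),
      PowerSeries.exp (Polynomial ℂ) ^ j *
        (-(PowerSeries.C (Polynomial.C lam))) ^ (r - j) * (r.choose j : PowerSeries (Polynomial ℂ)) := by
    rw [hA, sub_eq_add_neg, add_pow]
  have hAI : A * I = PowerSeries.C (Polynomial.C (1 - lam)) * A ^ r := by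
    rw [hI, Finset.mul_sum, hpow, Finset.mul_sum]
    refine Finset.sum_congr rfl fun j hj => ?_
    rw [mul_left_comm, hmap j]
    have hc : PowerSeries.C (Polynomial.C ((r.choose j : ℂ) * (-lam) ^ (r - j))) =
        (r.choose j : PowerSeries (Polynomial ℂ)) *
          (-(PowerSeries.C (Polynomial.C lam))) ^ (r - j) := by
      rw [map_mul, map_mul, map_pow, map_pow, map_neg, map_neg, map_natCast, map_natCast]
    rw [hc]
    ring
  -- step 3: cancellation
  have key : S 1 = PowerSeries.C (Polynomial.C (((1 - lam) ^ r)⁻¹)) * (I * S r) := by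
    have hcancel : A ^ (r + 1) ≠ 0 := pow_ne_zero _ hA0
    apply mul_left_cancel₀ hcancel
    have l1 : A ^ (r + 1) * S 1 = A ^ r * (A ^ 1 * S 1) := by ring
    rw [l1, hH 1]
    have l2 : A ^ (r + 1) * (PowerSeries.C (Polynomial.C (((1 - lam) ^ r)⁻¹)) * (I * S r)) =
        PowerSeries.C (Polynomial.C (((1 - lam) ^ r)⁻¹)) * ((A * I) * (A ^ r * S r)) := by
      ring
    rw [l2, hAI, hH r]
    rw [show PowerSeries.C (Polynomial.C (((1 - lam) ^ r)⁻¹)) *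
        (PowerSeries.C (Polynomial.C (1 - lam)) * A ^ r *
          (PowerSeries.C (Polynomial.C ((1 - lam) ^ r)) * E)) =
        (PowerSeries.C (Polynomial.C (((1 - lam) ^ r)⁻¹ * (1 - lam) ^ r))) *
          (PowerSeries.C (Polynomial.C (1 - lam)) * A ^ r * E) by
      rw [map_mul, map_mul]; ring]
    rw [inv_mul_cancel₀ (pow_ne_zero _ hone)]
    simp only [map_one, one_mul]
    rw [pow_one]
    ring
  -- step 4: coefficient of I
  have hcoeffI : ∀ m : ℕ, (PowerSeries.coeff m) I =
      Polynomial.C ((m.factorial : ℂ)⁻¹ *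
        ∑ j ∈ Finset.range (r + 1),
          (r.choose j : ℂ) * (-lam) ^ (r - j) * (H 1 m).eval (j : ℂ)) := by
    intro m
    rw [hI, map_sum]
    conv_rhs => rw [Finset.mul_sum, map_sum]
    refine Finset.sum_congr rfl fun j hj => ?_
    rw [PowerSeries.coeff_C_mul, PowerSeries.coeff_map]
    have : (PowerSeries.coeff m) (S 1) =
        Polynomial.C ((m.factorial : ℂ))⁻¹ * H 1 m := by
      rw [hS]; exact PowerSeries.coeff_mk _ _
    rw [this]
    simp only [feφ, RingHom.coe_comp, Function.comp_apply, Polynomial.coe_evalRingHom,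
      Polynomial.eval_mul, Polynomial.eval_C, map_mul]
    ring
  -- step 5: extract coefficient n
  have keyc := congrArg (PowerSeries.coeff n) key
  rw [PowerSeries.coeff_C_mul, mul_comm I (S r), PowerSeries.coeff_mul,
    Finset.Nat.sum_antidiagonal_eq_sum_range_succ_mk] at keyc
  have hSc : ∀ q m : ℕ, (PowerSeries.coeff m) (S q) =
      Polynomial.C ((m.factorial : ℂ))⁻¹ * H q m := by
    intro q m; rw [hS]; exact PowerSeries.coeff_mk _ _
  simp only [hSc, hcoeffI] at keyc
  -- keyc : C (n!⁻¹) * H 1 n = C inv * Σ_k (C (k!⁻¹) * H r k) * C ((n-k)!⁻¹ * inner (n-k))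
  have hfac : (n.factorial : ℂ) ≠ 0 := Nat.cast_ne_zero.mpr n.factorial_ne_zero
  have hHn : H 1 n = Polynomial.C ((n.factorial : ℂ)) *
      (Polynomial.C ((n.factorial : ℂ))⁻¹ * H 1 n) := by
    rw [← mul_assoc, ← map_mul, mul_inv_cancel₀ hfac, map_one, one_mul]
  rw [hHn, keyc, mul_left_comm, Finset.mul_sum]
  congr 1
  refine Finset.sum_congr rfl fun k hk => ?_
  have hk' : k ≤ n := Finset.mem_range_succ_iff.mp hk
  have hch : (n.choose k : ℂ) = (n.factorial : ℂ) / ((k.factorial : ℂ) * ((n - k).factorial : ℂ)) :=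
    Nat.cast_choose ℂ hk'
  have collect : Polynomial.C ((n.factorial : ℂ)) *
      (Polynomial.C ((k.factorial : ℂ))⁻¹ * H r k *
        Polynomial.C (((n - k).factorial : ℂ)⁻¹ *
          ∑ j ∈ Finset.range (r + 1),
            (r.choose j : ℂ) * (-lam) ^ (r - j) * (H 1 (n - k)).eval (j : ℂ))) =
      Polynomial.C ((n.factorial : ℂ) * (k.factorial : ℂ)⁻¹ * (((n - k).factorial : ℂ)⁻¹ *
          ∑ j ∈ Finset.range (r + 1),
            (r.choose j : ℂ) * (-lam) ^ (r - j) * (H 1 (n - k)).eval (j : ℂ))) * H r k := by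
    simp only [map_mul]
    ring
  rw [collect]
  congr 2
  rw [hch]
  have h1 : (k.factorial : ℂ) ≠ 0 := Nat.cast_ne_zero.mpr k.factorial_ne_zero
  have h2 : ((n - k).factorial : ℂ) ≠ 0 := Nat.cast_ne_zero.mpr (n - k).factorial_ne_zero
  field_simp
end
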